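/- For v uniformly distributed on the unit sphere in ℝⁿ and A symmetric with eigenvalues λ₁,…,λₙ, the variance of the quadratic form satisfies Var[vᵀ f(A) v] = (2/(n(n+2)))·Σᵢ f(λᵢ)² − (2/(n²(n+2)))·(Σᵢ f(λᵢ))². -/

import Mathlib

open MeasureTheory Matrix

section SphereAux

variable {Ω : Type*} [MeasurableSpace Ω] {μ : Measure Ω} {n : ℕ}

lemma aux_measurable_mulVec (R : Matrix (Fin n) (Fin n) ℝ) :
    Measurable (fun x : Fin n → ℝ => R.mulVec x) := by
  apply measurable_pi_lambda
  intro i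
  simp only [Matrix.mulVec, dotProduct]
  exact Finset.measurable_sum _ fun j _ => (measurable_pi_apply j).const_mul (M := ℝ) (R i j)

lemma aux_push (v : Ω → Fin n → ℝ) (hv : Measurable v)
    (hrot : ∀ R : Matrix (Fin n) (Fin n) ℝ, Rᵀ * R = 1 →
      Measure.map (fun ω => R.mulVec (v ω)) μ = Measure.map v μ)
    (R : Matrix (Fin n) (Fin n) ℝ) (hR : Rᵀ * R = 1)
    (g : (Fin n → ℝ) → ℝ) (hg : Measurable g) :
    ∫ ω, g (R.mulVec (v ω)) ∂μ = ∫ ω, g (v ω) ∂μ := by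
  have h1 : Measurable (fun ω => R.mulVec (v ω)) := (aux_measurable_mulVec R).comp hv
  rw [← integral_map h1.aemeasurable hg.aestronglyMeasurable, hrot R hR,
      integral_map hv.aemeasurable hg.aestronglyMeasurable]

lemma aux_coord_bound {x : Fin n → ℝ} (hx : ∑ i, x i ^ 2 = 1) (i : Fin n) : |x i| ≤ 1 := by
  have h : x i ^ 2 ≤ 1 :=
    hx ▸ Finset.single_le_sum (fun j _ => sq_nonneg (x j)) (Finset.mem_univ i)
  nlinarith [abs_nonneg (x i), sq_abs (x i)]

lemma aux_pow_bound {x : Fin n → ℝ} (hx : ∑ i, x i ^ 2 = 1) (i j : Fin n) (a b : ℕ) :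
    |x i ^ a * x j ^ b| ≤ 1 := by
  rw [abs_mul, abs_pow, abs_pow]
  exact mul_le_one₀ (pow_le_one₀ (abs_nonneg _) (aux_coord_bound hx i))
    (pow_nonneg (abs_nonneg _) b) (pow_le_one₀ (abs_nonneg _) (aux_coord_bound hx j))

lemma aux_intg [IsProbabilityMeasure μ] (v : Ω → Fin n → ℝ) (hv : Measurable v)
    (hnorm : ∀ ω, ∑ i, (v ω i) ^ 2 = 1)
    (g : (Fin n → ℝ) → ℝ) (hg : Measurable g) (C : ℝ)
    (hb : ∀ x : Fin n → ℝ, (∑ i, x i ^ 2 = 1) → |g x| ≤ C) :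
    Integrable (fun ω => g (v ω)) μ := by
  refine Integrable.mono' (integrable_const C) (hg.comp hv).aestronglyMeasurable ?_
  exact ae_of_all _ fun ω => by simpa [Real.norm_eq_abs] using hb (v ω) (hnorm ω)

lemma aux_intg_mono [IsProbabilityMeasure μ] (v : Ω → Fin n → ℝ) (hv : Measurable v)
    (hnorm : ∀ ω, ∑ i, (v ω i) ^ 2 = 1) (i j : Fin n) (a b : ℕ) :
    Integrable (fun ω => (v ω i) ^ a * (v ω j) ^ b) μ := by
  refine aux_intg v hv hnorm (fun x => x i ^ a * x j ^ b)
    (((measurable_pi_apply i).pow_const a).mul ((measurable_pi_apply j).pow_const b)) 1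
    (fun x hx => aux_pow_bound hx i j a b)

/-! ### Permutation matrices -/

def permMat (σ : Equiv.Perm (Fin n)) : Matrix (Fin n) (Fin n) ℝ :=
  Matrix.of fun k l => if l = σ k then 1 else 0

lemma permMat_mulVec (σ : Equiv.Perm (Fin n)) (x : Fin n → ℝ) :
    (permMat σ).mulVec x = fun k => x (σ k) := by
  funext k
  simp [permMat, Matrix.mulVec, dotProduct, Finset.sum_ite_eq']

lemma permMat_orth (σ : Equiv.Perm (Fin n)) : (permMat σ)ᵀ * permMat σ = 1 := by
  ext k l
  simp only [permMat, Matrix.mul_apply, Matrix.transpose_apply, Matrix.of_apply,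
    Matrix.one_apply]
  have h : ∀ m : Fin n, (if k = σ m then (1:ℝ) else 0) * (if l = σ m then 1 else 0)
      = if m = σ⁻¹ k then (if l = σ m then 1 else 0) else 0 := by
    intro m
    by_cases hm : m = σ⁻¹ k
    · subst hm; simp
    · have hk : ¬ (k = σ m) := fun h => hm (by rw [h, Equiv.Perm.inv_def, Equiv.symm_apply_apply])
      rw [if_neg hk, if_neg hm, zero_mul]
  rw [Finset.sum_congr rfl fun m _ => h m, Finset.sum_ite_eq']
  by_cases hkl : k = l
  · simp [hkl]
  · have : l ≠ σ (σ⁻¹ k) := by simpa using Ne.symm hkl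
    simp [hkl, this, Ne.symm hkl]

lemma aux_perm_int [IsProbabilityMeasure μ] (v : Ω → Fin n → ℝ) (hv : Measurable v)
    (hrot : ∀ R : Matrix (Fin n) (Fin n) ℝ, Rᵀ * R = 1 →
      Measure.map (fun ω => R.mulVec (v ω)) μ = Measure.map v μ)
    (σ : Equiv.Perm (Fin n)) (g : (Fin n → ℝ) → ℝ) (hg : Measurable g) :
    ∫ ω, g (fun k => v ω (σ k)) ∂μ = ∫ ω, g (v ω) ∂μ := by
  have := aux_push v hv hrot (permMat σ) (permMat_orth σ) g hg
  simpa [permMat_mulVec] using this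

lemma exists_perm_pair {i j a b : Fin n} (hij : i ≠ j) (hab : a ≠ b) :
    ∃ σ : Equiv.Perm (Fin n), σ a = i ∧ σ b = j := by
  classical
  set τ := Equiv.swap a i with hτ
  have hτb : τ b ≠ i := by
    intro h
    have : b = a := by
      have := congrArg τ h
      rwa [Equiv.swap_apply_self, Equiv.swap_apply_right] at this
    exact hab this.symm
  refine ⟨τ.trans (Equiv.swap (τ b) j), ?_, ?_⟩
  · show Equiv.swap (τ b) j (τ a) = i
    rw [hτ, Equiv.swap_apply_left]
    exact Equiv.swap_apply_of_ne_of_ne (Ne.symm hτb) hij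
  · show Equiv.swap (τ b) j (τ b) = j
    exact Equiv.swap_apply_left _ _

/-! ### Sign flip matrix -/

def signMat (j : Fin n) : Matrix (Fin n) (Fin n) ℝ :=
  Matrix.diagonal (fun k => if k = j then -1 else 1)

lemma signMat_orth (j : Fin n) : (signMat j)ᵀ * signMat j = 1 := by
  rw [signMat, Matrix.diagonal_transpose, Matrix.diagonal_mul_diagonal]
  ext k l
  rcases eq_or_ne k l with h | h
  · subst h
    by_cases hk : k = j <;> simp [Matrix.diagonal_apply_eq, hk]
  · simp [Matrix.diagonal_apply_ne _ h, Matrix.one_apply_ne h]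

lemma signMat_mulVec (j : Fin n) (x : Fin n → ℝ) :
    (signMat j).mulVec x = fun k => if k = j then -x k else x k := by
  funext k
  by_cases h : k = j <;> simp [signMat, Matrix.mulVec_diagonal, h]

/-! ### Rotation matrix -/

noncomputable def rotMat (i j : Fin n) : Matrix (Fin n) (Fin n) ℝ :=
  Matrix.of fun k l =>
    if k = i then (if l = i then (Real.sqrt 2)⁻¹ else if l = j then (Real.sqrt 2)⁻¹ else 0)
    else if k = j then (if l = i then -(Real.sqrt 2)⁻¹ else if l = j then (Real.sqrt 2)⁻¹ else 0)
    else if l = k then 1 else 0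

lemma sqrt2_sq' : (Real.sqrt 2)⁻¹ * (Real.sqrt 2)⁻¹ = 1/2 := by
  rw [← mul_inv, Real.mul_self_sqrt (by norm_num : (0:ℝ) ≤ 2)]; norm_num

lemma row_i {i j : Fin n} (hij : i ≠ j) (x : Fin n → ℝ) :
    ∑ l, (if l = i then (Real.sqrt 2)⁻¹ else if l = j then (Real.sqrt 2)⁻¹ else 0) * x l
      = (Real.sqrt 2)⁻¹ * (x i + x j) := by
  have h : ∀ l, (if l = i then (Real.sqrt 2)⁻¹ else if l = j then (Real.sqrt 2)⁻¹ else 0) * x l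
      = (if l = i then (Real.sqrt 2)⁻¹ * x i else 0) + (if l = j then (Real.sqrt 2)⁻¹ * x j else 0) := by
    intro l
    by_cases h1 : l = i <;> by_cases h2 : l = j <;> simp_all [hij]
  rw [Finset.sum_congr rfl fun l _ => h l, Finset.sum_add_distrib,
    Finset.sum_ite_eq' Finset.univ i, Finset.sum_ite_eq' Finset.univ j]
  simp; ring

lemma row_j {i j : Fin n} (hij : i ≠ j) (x : Fin n → ℝ) :
    ∑ l, (if l = i then -(Real.sqrt 2)⁻¹ else if l = j then (Real.sqrt 2)⁻¹ else 0) * x l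
      = (Real.sqrt 2)⁻¹ * (x j - x i) := by
  have h : ∀ l, (if l = i then -(Real.sqrt 2)⁻¹ else if l = j then (Real.sqrt 2)⁻¹ else 0) * x l
      = (if l = i then -((Real.sqrt 2)⁻¹ * x i) else 0) + (if l = j then (Real.sqrt 2)⁻¹ * x j else 0) := by
    intro l
    by_cases h1 : l = i <;> by_cases h2 : l = j <;> simp_all [hij]
  rw [Finset.sum_congr rfl fun l _ => h l, Finset.sum_add_distrib,
    Finset.sum_ite_eq' Finset.univ i, Finset.sum_ite_eq' Finset.univ j]
  simp; ring

lemma rotMat_mulVec {i j : Fin n} (hij : i ≠ j) (x : Fin n → ℝ) :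
    (rotMat i j).mulVec x = fun k =>
      if k = i then (Real.sqrt 2)⁻¹ * (x i + x j)
      else if k = j then (Real.sqrt 2)⁻¹ * (x j - x i) else x k := by
  funext k
  simp only [Matrix.mulVec, dotProduct, rotMat, Matrix.of_apply]
  by_cases hk : k = i
  · simp only [if_pos hk]
    rw [row_i hij]
  · simp only [if_neg hk]
    by_cases hk2 : k = j
    · simp only [if_pos hk2]
      rw [row_j hij]
    · simp only [if_neg hk2]
      rw [Finset.sum_congr rfl (fun l _ => ?_), Finset.sum_ite_eq' Finset.univ k x,
        if_pos (Finset.mem_univ k)]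
      by_cases h : l = k <;> simp [h]

lemma rotMat_orth {i j : Fin n} (hij : i ≠ j) : (rotMat i j)ᵀ * rotMat i j = 1 := by
  have hc := sqrt2_sq'
  set c := (Real.sqrt 2)⁻¹ with hcdef
  ext k l
  simp only [Matrix.mul_apply, Matrix.transpose_apply, rotMat, Matrix.of_apply,
    Matrix.one_apply]
  set F : Fin n → ℝ := fun m =>
    (if m = i then (if k = i then c else if k = j then c else 0)
      else if m = j then (if k = i then -c else if k = j then c else 0)
      else if k = m then 1 else 0) *
    (if m = i then (if l = i then c else if l = j then c else 0)
      else if m = j then (if l = i then -c else if l = j then c else 0)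
      else if l = m then 1 else 0) with hF
  show ∑ m, F m = _
  have hji : j ≠ i := hij.symm
  have hjmem : j ∈ Finset.univ.erase i := Finset.mem_erase.2 ⟨hji, Finset.mem_univ j⟩
  rw [← Finset.add_sum_erase Finset.univ F (Finset.mem_univ i),
      ← Finset.add_sum_erase _ F hjmem]
  have htail : ∑ m ∈ (Finset.univ.erase i).erase j, F m
      = if k = l ∧ k ≠ i ∧ k ≠ j then 1 else 0 := by
    have h : ∀ m ∈ (Finset.univ.erase i).erase j, F m
        = if m = k then (if l = k then 1 else 0) else 0 := by
      intro m hm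
      obtain ⟨hmj, hmi, -⟩ : m ≠ j ∧ m ≠ i ∧ True := by
        simpa [Finset.mem_erase, and_assoc] using hm
      simp only [hF, if_neg hmi, if_neg hmj]
      by_cases h1 : m = k
      · subst h1; simp
      · simp only [if_neg h1]
        have h2 : ¬ k = m := fun h => h1 h.symm
        simp [h2]
    rw [Finset.sum_congr rfl h, Finset.sum_ite_eq' _ k]
    by_cases hk : k ∈ (Finset.univ.erase i).erase j
    · obtain ⟨hkj, hki, -⟩ : k ≠ j ∧ k ≠ i ∧ True := by
        simpa [Finset.mem_erase, and_assoc] using hk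
      by_cases hkl : k = l <;> simp [hk, hki, hkj, hkl, eq_comm, and_comm]
    · have : k = i ∨ k = j := by
        by_contra hcon
        push_neg at hcon
        exact hk (Finset.mem_erase.2 ⟨hcon.2, Finset.mem_erase.2 ⟨hcon.1, Finset.mem_univ k⟩⟩)
      rcases this with h | h <;> simp [hk, h]
  rw [htail]
  simp only [hF, if_pos rfl, if_neg hji]
  by_cases hki : k = i <;> by_cases hkj : k = j <;>
    by_cases hli : l = i <;> by_cases hlj : l = j <;>
      simp_all <;>
      first
        | nlinarith [hc]
        | (rw [if_neg (fun h => absurd h.symm (by assumption))])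
        | exact fun h => absurd h.symm (by assumption)

end SphereAux

/-- Variance of the quadratic form of a uniform unit vector on the sphere:
`Var[vᵀ f(A) v] = (2/(n(n+2))) Σ f(λᵢ)² − (2/(n²(n+2))) (Σ f(λᵢ))²`,
where `Var[X] = E[X²] − (E[X])²`. -/
theorem sphere_quadratic_form_variance
    {Ω : Type*} [MeasurableSpace Ω] (μ : Measure Ω) [IsProbabilityMeasure μ]
    (n : ℕ) (hn : 0 < n)
    (A Q : Matrix (Fin n) (Fin n) ℝ) (lam : Fin n → ℝ) (f : ℝ → ℝ)
    (hQ : Qᵀ * Q = 1) (hA : A = Q * Matrix.diagonal lam * Qᵀ)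
    (fA : Matrix (Fin n) (Fin n) ℝ)
    (hfA : fA = Q * Matrix.diagonal (fun i => f (lam i)) * Qᵀ)
    (v : Ω → Fin n → ℝ) (hv : Measurable v)
    (hnorm : ∀ ω, ∑ i, (v ω i) ^ 2 = 1)
    (hrot : ∀ R : Matrix (Fin n) (Fin n) ℝ, Rᵀ * R = 1 →
      Measure.map (fun ω => R.mulVec (v ω)) μ = Measure.map v μ) :
    (∫ ω, (v ω ⬝ᵥ fA.mulVec (v ω)) ^ 2 ∂μ) - (∫ ω, v ω ⬝ᵥ fA.mulVec (v ω) ∂μ) ^ 2 =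
      (2 / (n * (n + 2))) * ∑ i, f (lam i) ^ 2
        - (2 / ((n : ℝ) ^ 2 * (n + 2))) * (∑ i, f (lam i)) ^ 2 := by
  classical
  set fv : Fin n → ℝ := fun i => f (lam i) with hfv
  -- the quadratic form in rotated coordinates
  set g1 : (Fin n → ℝ) → ℝ := fun x => ∑ i, fv i * x i ^ 2 with hg1def
  have hg1 : Measurable g1 :=
    Finset.measurable_sum _ fun i _ => ((measurable_pi_apply i).pow_const 2).const_mul (M := ℝ) (fv i)
  have hform : ∀ x : Fin n → ℝ, x ⬝ᵥ fA.mulVec x = g1 (Qᵀ.mulVec x) := by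
    intro x
    rw [hfA, ← Matrix.mulVec_mulVec, ← Matrix.mulVec_mulVec, dotProduct_mulVec,
      ← Matrix.mulVec_transpose]
    simp only [hg1def, dotProduct, Matrix.mulVec_diagonal]
    exact Finset.sum_congr rfl fun i _ => by ring
  have hQQ : Qᵀᵀ * Qᵀ = 1 := by
    rw [Matrix.transpose_transpose]
    exact mul_eq_one_comm.mp hQ
  -- reduce both integrals to integrals of g1 ∘ v
  have hE1 : ∫ ω, v ω ⬝ᵥ fA.mulVec (v ω) ∂μ = ∫ ω, g1 (v ω) ∂μ := by
    rw [show (fun ω => v ω ⬝ᵥ fA.mulVec (v ω)) = fun ω => g1 (Qᵀ.mulVec (v ω)) from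
      funext fun ω => hform (v ω)]
    exact aux_push v hv hrot Qᵀ hQQ g1 hg1
  have hE2 : ∫ ω, (v ω ⬝ᵥ fA.mulVec (v ω)) ^ 2 ∂μ = ∫ ω, (g1 (v ω)) ^ 2 ∂μ := by
    rw [show (fun ω => (v ω ⬝ᵥ fA.mulVec (v ω)) ^ 2)
        = fun ω => (fun x => (g1 x) ^ 2) (Qᵀ.mulVec (v ω)) from
      funext fun ω => by rw [hform (v ω)]]
    exact aux_push v hv hrot Qᵀ hQQ _ (hg1.pow_const 2)
  rw [hE1, hE2]
  -- notation for integrability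
  have I : ∀ (i j : Fin n) (a b : ℕ), Integrable (fun ω => (v ω i) ^ a * (v ω j) ^ b) μ :=
    fun i j a b => aux_intg_mono v hv hnorm i j a b
  have I2 : ∀ i : Fin n, Integrable (fun ω => (v ω i) ^ 2) μ := by
    intro i
    have := I i i 2 0
    simpa using this
  set i0 : Fin n := ⟨0, hn⟩ with hi0
  -- second moments
  have hswap2 : ∀ i : Fin n, ∫ ω, (v ω i) ^ 2 ∂μ = ∫ ω, (v ω i0) ^ 2 ∂μ := by
    intro i
    have := aux_perm_int v hv hrot (Equiv.swap i0 i) (fun x => x i0 ^ 2)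
      ((measurable_pi_apply i0).pow_const 2)
    simpa [Equiv.swap_apply_left] using this
  have hsum2 : ∑ i : Fin n, ∫ ω, (v ω i) ^ 2 ∂μ = 1 := by
    rw [← integral_finset_sum _ (fun i _ => I2 i)]
    simp only [hnorm]
    simp
  have hnR : (n : ℝ) ≠ 0 := Nat.cast_ne_zero.mpr hn.ne'
  have hm2 : ∫ ω, (v ω i0) ^ 2 ∂μ = 1 / n := by
    have : ∑ i : Fin n, ∫ ω, (v ω i) ^ 2 ∂μ = n * ∫ ω, (v ω i0) ^ 2 ∂μ := by
      rw [Finset.sum_congr rfl fun i _ => hswap2 i, Finset.sum_const, Finset.card_univ,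
        Fintype.card_fin, nsmul_eq_mul]
    rw [this] at hsum2
    field_simp
    linarith [hsum2]
  have hm2all : ∀ i : Fin n, ∫ ω, (v ω i) ^ 2 ∂μ = 1 / n := fun i => (hswap2 i).trans hm2
  -- fourth moments
  have hM : ∀ i j : Fin n, ∫ ω, (v ω i) ^ 2 * (v ω j) ^ 2 ∂μ
      = if i = j then 3 / ((n : ℝ) * (n + 2)) else 1 / ((n : ℝ) * (n + 2)) := by
    have hdiag : ∀ i : Fin n, ∫ ω, (v ω i) ^ 2 * (v ω i) ^ 2 ∂μ = ∫ ω, (v ω i) ^ 4 ∂μ :=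
      fun i => integral_congr_ae (ae_of_all _ fun ω => by ring)
    have hswap4 : ∀ i : Fin n, ∫ ω, (v ω i) ^ 4 ∂μ = ∫ ω, (v ω i0) ^ 4 ∂μ := by
      intro i
      have := aux_perm_int v hv hrot (Equiv.swap i0 i) (fun x => x i0 ^ 4)
        ((measurable_pi_apply i0).pow_const 4)
      simpa [Equiv.swap_apply_left] using this
    by_cases hn1 : n = 1
    · subst hn1
      intro i j
      have hij : i = j := Subsingleton.elim i j
      subst hij
      have hpt : ∀ ω, (v ω i) ^ 2 * (v ω i) ^ 2 = 1 := by
        intro ω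
        have h1 := hnorm ω
        rw [Fin.sum_univ_one] at h1
        have hi : i = 0 := Subsingleton.elim i 0
        rw [hi, h1]
        norm_num
      rw [show (fun ω => v ω i ^ 2 * v ω i ^ 2) = fun _ => (1:ℝ) from funext hpt]
      simp
      norm_num
    · have hn2 : 1 < n := by omega
      set i1 : Fin n := ⟨1, hn2⟩ with hi1
      have h01 : i0 ≠ i1 := by
        simp only [hi0, hi1, ne_eq, Fin.mk.injEq]
        omega
      have hswap22 : ∀ i j : Fin n, i ≠ j →
          ∫ ω, (v ω i) ^ 2 * (v ω j) ^ 2 ∂μ = ∫ ω, (v ω i0) ^ 2 * (v ω i1) ^ 2 ∂μ := by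
        intro i j hij
        obtain ⟨σ, hσ0, hσ1⟩ := exists_perm_pair hij h01
        have := aux_perm_int v hv hrot σ (fun x => x i0 ^ 2 * x i1 ^ 2)
          (((measurable_pi_apply i0).pow_const 2).mul ((measurable_pi_apply i1).pow_const 2))
        simpa [hσ0, hσ1] using this
      have hodd : ∀ i j : Fin n, i ≠ j → ∫ ω, (v ω i) ^ 3 * (v ω j) ∂μ = 0 := by
        intro i j hij
        have hg : Measurable (fun x : Fin n → ℝ => (x i) ^ 3 * x j) :=
          ((measurable_pi_apply i).pow_const 3).mul (measurable_pi_apply j)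
        have hp := aux_push v hv hrot (signMat j) (signMat_orth j) _ hg
        have hpt : ∀ ω, ((signMat j).mulVec (v ω)) i ^ 3 * ((signMat j).mulVec (v ω)) j
            = -((v ω i) ^ 3 * (v ω j)) := by
          intro ω
          rw [signMat_mulVec]
          simp [hij]
        simp only [hpt] at hp
        rw [integral_neg] at hp
        linarith [hp]
      have I4 : Integrable (fun ω => (v ω i0) ^ 4) μ := by simpa using I i0 i0 4 0
      have I31 : Integrable (fun ω => (v ω i0) ^ 3 * (v ω i1)) μ := by simpa using I i0 i1 3 1
      have I13 : Integrable (fun ω => (v ω i1) ^ 3 * (v ω i0)) μ := by simpa using I i1 i0 3 1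
      have hrot4 : ∫ ω, (v ω i0) ^ 4 ∂μ = 3 * ∫ ω, (v ω i0) ^ 2 * (v ω i1) ^ 2 ∂μ := by
        have hg : Measurable (fun x : Fin n → ℝ => (x i0) ^ 4) := (measurable_pi_apply i0).pow_const 4
        have hp := aux_push v hv hrot (rotMat i0 i1) (rotMat_orth h01) _ hg
        have hc4 : ((Real.sqrt 2)⁻¹) ^ 4 = 1 / 4 := by
          have h2 := sqrt2_sq'
          nlinarith [h2]
        have hpt : ∀ ω, ((rotMat i0 i1).mulVec (v ω)) i0 ^ 4
            = (1/4) * (v ω i0) ^ 4 + ((v ω i0) ^ 3 * (v ω i1)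
              + ((3/2) * ((v ω i0) ^ 2 * (v ω i1) ^ 2)
              + ((v ω i1) ^ 3 * (v ω i0) + (1/4) * ((v ω i1) ^ 2 * (v ω i1) ^ 2)))) := by
          intro ω
          rw [rotMat_mulVec h01]
          simp only [if_pos]
          rw [mul_pow, hc4]
          ring
        simp only [hpt] at hp
        have c1 : Integrable (fun ω => (1/4 : ℝ) * (v ω i0) ^ 4) μ := I4.const_mul _
        have c3 : Integrable (fun ω => (3/2 : ℝ) * ((v ω i0) ^ 2 * (v ω i1) ^ 2)) μ :=
          (I i0 i1 2 2).const_mul _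
        have c5 : Integrable (fun ω => (1/4 : ℝ) * ((v ω i1) ^ 2 * (v ω i1) ^ 2)) μ :=
          (I i1 i1 2 2).const_mul _
        have c45 : Integrable (fun ω => (v ω i1) ^ 3 * (v ω i0)
            + (1/4 : ℝ) * ((v ω i1) ^ 2 * (v ω i1) ^ 2)) μ := I13.add c5
        have c345 : Integrable (fun ω => (3/2 : ℝ) * ((v ω i0) ^ 2 * (v ω i1) ^ 2)
            + ((v ω i1) ^ 3 * (v ω i0) + (1/4 : ℝ) * ((v ω i1) ^ 2 * (v ω i1) ^ 2))) μ :=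
          c3.add c45
        have c2345 : Integrable (fun ω => (v ω i0) ^ 3 * (v ω i1)
            + ((3/2 : ℝ) * ((v ω i0) ^ 2 * (v ω i1) ^ 2)
              + ((v ω i1) ^ 3 * (v ω i0) + (1/4 : ℝ) * ((v ω i1) ^ 2 * (v ω i1) ^ 2)))) μ :=
          I31.add c345
        rw [integral_add c1 c2345, integral_add I31 c345, integral_add c3 c45,
          integral_add I13 c5] at hp
        simp only [MeasureTheory.integral_const_mul] at hp
        rw [hodd i0 i1 h01, hodd i1 i0 h01.symm, hdiag i1, hswap4 i1] at hp
        linarith [hp]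
      have h1 : ∑ j : Fin n, ∫ ω, (v ω i0) ^ 2 * (v ω j) ^ 2 ∂μ = 1 / n := by
        rw [← integral_finset_sum _ (fun j _ => I i0 j 2 2)]
        rw [show (fun ω => ∑ j, (v ω i0) ^ 2 * (v ω j) ^ 2) = fun ω => (v ω i0) ^ 2 from
          funext fun ω => by rw [← Finset.mul_sum, hnorm, mul_one]]
        exact hm2all i0
      have h2 : ∑ j : Fin n, ∫ ω, (v ω i0) ^ 2 * (v ω j) ^ 2 ∂μ
          = (n : ℝ) * ∫ ω, (v ω i0) ^ 2 * (v ω i1) ^ 2 ∂μ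
            + (∫ ω, (v ω i0) ^ 4 ∂μ - ∫ ω, (v ω i0) ^ 2 * (v ω i1) ^ 2 ∂μ) := by
        have hterm : ∀ j : Fin n, ∫ ω, (v ω i0) ^ 2 * (v ω j) ^ 2 ∂μ
            = ∫ ω, (v ω i0) ^ 2 * (v ω i1) ^ 2 ∂μ
              + (if j = i0 then (∫ ω, (v ω i0) ^ 4 ∂μ - ∫ ω, (v ω i0) ^ 2 * (v ω i1) ^ 2 ∂μ)
                else 0) := by
          intro j
          by_cases hj : j = i0
          · subst hj
            rw [if_pos rfl, hdiag i0]
            ring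
          · rw [if_neg hj, hswap22 i0 j (fun h => hj h.symm), add_zero]
        rw [Finset.sum_congr rfl fun j _ => hterm j, Finset.sum_add_distrib,
          Finset.sum_const, Finset.card_univ, Fintype.card_fin, nsmul_eq_mul,
          Finset.sum_ite_eq' Finset.univ i0, if_pos (Finset.mem_univ i0)]
      have hne : ((n : ℝ) * (n + 2)) ≠ 0 := by positivity
      have hm22 : ∫ ω, (v ω i0) ^ 2 * (v ω i1) ^ 2 ∂μ = 1 / ((n : ℝ) * (n + 2)) := by
        rw [h2, hrot4] at h1
        rw [eq_div_iff hne]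
        have hn' : (1 : ℝ) / n * n = 1 := by field_simp
        nlinarith [h1, hn']
      have hm4 : ∫ ω, (v ω i0) ^ 4 ∂μ = 3 / ((n : ℝ) * (n + 2)) := by
        rw [hrot4, hm22]
        ring
      intro i j
      by_cases h : i = j
      · subst h
        rw [if_pos rfl, hdiag i, hswap4 i, hm4]
      · rw [if_neg h, hswap22 i j h, hm22]
  -- expectation of the quadratic form
  have hEX : ∫ ω, g1 (v ω) ∂μ = (∑ i, fv i) / n := by
    simp only [hg1def]
    rw [integral_finset_sum _ (fun i _ => (I2 i).const_mul (fv i))]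
    rw [Finset.sum_congr rfl fun i _ => by
      rw [MeasureTheory.integral_const_mul, hm2all i]]
    rw [Finset.sum_div]
    exact Finset.sum_congr rfl fun i _ => by ring
  -- second moment of the quadratic form
  have hEX2 : ∫ ω, (g1 (v ω)) ^ 2 ∂μ
      = (∑ i, fv i) ^ 2 * (1 / ((n : ℝ) * (n + 2))) + (∑ i, fv i ^ 2) * (2 / ((n : ℝ) * (n + 2))) := by
    have hpt : ∀ ω, (g1 (v ω)) ^ 2
        = ∑ i, ∑ j, (fv i * fv j) * ((v ω i) ^ 2 * (v ω j) ^ 2) := by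
      intro ω
      simp only [hg1def]
      rw [sq, Finset.sum_mul_sum]
      exact Finset.sum_congr rfl fun i _ => Finset.sum_congr rfl fun j _ => by ring
    rw [show (fun ω => (g1 (v ω)) ^ 2)
        = fun ω => ∑ i, ∑ j, (fv i * fv j) * ((v ω i) ^ 2 * (v ω j) ^ 2) from
      funext hpt]
    rw [integral_finset_sum _ (fun i _ => integrable_finset_sum _
      (fun j _ => (I i j 2 2).const_mul (fv i * fv j)))]
    rw [Finset.sum_congr rfl fun i _ => integral_finset_sum _
      (fun j _ => (I i j 2 2).const_mul (fv i * fv j))]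
    rw [Finset.sum_congr rfl fun i _ => Finset.sum_congr rfl fun j _ => by
      rw [MeasureTheory.integral_const_mul, hM i j]]
    have inner : ∀ i : Fin n, ∑ j, fv i * fv j *
        (if i = j then 3 / ((n : ℝ) * (n + 2)) else 1 / ((n : ℝ)*(n+2)))
        = fv i * (∑ j, fv j) * (1 / ((n : ℝ) * (n + 2))) + fv i ^ 2 * (2 / ((n : ℝ) * (n + 2))) := by
      intro i
      have hterm : ∀ j : Fin n, fv i * fv j *
          (if i = j then 3 / ((n : ℝ) * (n + 2)) else 1 / ((n : ℝ)*(n+2)))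
          = (fv i * (1 / ((n : ℝ) * (n + 2)))) * fv j
            + (if j = i then fv i ^ 2 * (2 / ((n : ℝ) * (n + 2))) else 0) := by
        intro j
        by_cases h : i = j
        · subst h
          have hn2R : (n:ℝ) + 2 ≠ 0 := by positivity
          simp only [if_pos rfl, eq_self_iff_true, if_true]
          field_simp
          ring
        · have h' : ¬ j = i := fun hh => h hh.symm
          simp only [if_neg h, if_neg h']; ring
      rw [Finset.sum_congr rfl fun j _ => hterm j, Finset.sum_add_distrib, ← Finset.mul_sum,
        Finset.sum_ite_eq' Finset.univ i, if_pos (Finset.mem_univ i)]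
      ring
    rw [Finset.sum_congr rfl fun i _ => inner i, Finset.sum_add_distrib]
    rw [← Finset.sum_mul, ← Finset.sum_mul, ← Finset.sum_mul]
    ring
  rw [hEX, hEX2]
  have hn2R : (n : ℝ) + 2 ≠ 0 := by positivity
  field_simp
  ring
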